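/- Let A, B₁, B₂ be finite rooted trees and let φ₁ : B₁ → A and φ₂ : B₂ → A be epimorphisms. Then there exist a finite rooted tree C (which may moreover be taken to be a fan) and epimorphisms φ₃ : C → B₁ and φ₄ : C → B₂ such that φ₁ ∘ φ₃ = φ₂ ∘ φ₄. (The amalgamation property for the family of finite rooted trees; Proposition 2.3, AP part.) -/

import Mathlib

/-- A finite rooted tree: a finite partial order with a least element (the root) in which
the set of predecessors of any element is linearly ordered. -/
structure FiniteRootedTree where
  carrier : Type
  [fintype : Fintype carrier]
  [po : PartialOrder carrier]
  [bot : OrderBot carrier]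
  chains : ∀ t : carrier, IsChain (· ≤ ·) {s | s ≤ t}

attribute [instance] FiniteRootedTree.fintype FiniteRootedTree.po FiniteRootedTree.bot

/-- `R^T(s,t)` iff `s = t` or `t` is an immediate successor of `s` (i.e. `t` covers `s`). -/
def FiniteRootedTree.R (T : FiniteRootedTree) (s t : T.carrier) : Prop := s = t ∨ s ⋖ t

/-- An epimorphism between finite rooted trees: a surjection that preserves the
relation `R` and lifts related pairs. -/
def IsTreeEpi (S T : FiniteRootedTree) (φ : S.carrier → T.carrier) : Prop :=
  Function.Surjective φ ∧
  (∀ s s' : S.carrier, S.R s s' → T.R (φ s) (φ s')) ∧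
  (∀ t t' : T.carrier, T.R t t' → ∃ s s' : S.carrier, φ s = t ∧ φ s' = t' ∧ S.R s s')

/-- A fan: a finite rooted tree in which any common `R`-predecessor of two incomparable
points (other than the points themselves) is the root, and all branches (maximal chains)
have the same number of elements. -/
def IsFan (T : FiniteRootedTree) : Prop :=
  (∀ s t p : T.carrier, ¬ s ≤ t → ¬ t ≤ s → p ≠ s → p ≠ t → T.R p s → T.R p t → p = ⊥) ∧
  (∀ b₁ b₂ : Set T.carrier, IsMaxChain (· ≤ ·) b₁ → IsMaxChain (· ≤ ·) b₂ →
    b₁.ncard = b₂.ncard)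

namespace APaux

lemma R_le {T : FiniteRootedTree} {s t : T.carrier} (h : T.R s t) : s ≤ t := by
  rcases h with rfl | h
  · exact le_rfl
  · exact h.le

lemma R_refl {T : FiniteRootedTree} (s : T.carrier) : T.R s s := Or.inl rfl

lemma comparable_of_le {T : FiniteRootedTree} {x y b : T.carrier} (hx : x ≤ b) (hy : y ≤ b) :
    x ≤ y ∨ y ≤ x := by
  by_cases h : x = y
  · exact Or.inl h.le
  · exact T.chains b hx hy h

lemma cover_unique {T : FiniteRootedTree} {x y y' b : T.carrier}
    (h : x ⋖ y) (h' : x ⋖ y') (hy : y ≤ b) (hy' : y' ≤ b) : y = y' := by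
  rcases comparable_of_le hy hy' with hc | hc
  · rcases hc.lt_or_eq with hlt | he
    · exact absurd hlt (h'.2 h.1)  -- x < y < y' contradicts x ⋖ y'
    · exact he
  · rcases hc.lt_or_eq with hlt | he
    · exact absurd hlt (h.2 h'.1)
    · exact he.symm

lemma exists_cover_le {T : FiniteRootedTree} {x b : T.carrier} (h : x < b) :
    ∃ y, x ⋖ y ∧ y ≤ b := by
  have hne : ({y | x < y ∧ y ≤ b} : Set T.carrier).Nonempty := ⟨b, h, le_rfl⟩
  have hfin : ({y | x < y ∧ y ≤ b} : Set T.carrier).Finite := Set.toFinite _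
  obtain ⟨w, hw, hmin⟩ := Set.Finite.exists_minimalFor id _ hfin hne
  refine ⟨w, ⟨hw.1, ?_⟩, hw.2⟩
  intro z hz hzw
  have hzset : z ∈ {y | x < y ∧ y ≤ b} := ⟨hz, hzw.le.trans hw.2⟩
  exact absurd (hmin hzset hzw.le) (not_le_of_gt hzw)

lemma exists_cover_ge {T : FiniteRootedTree} {x b : T.carrier} (h : x < b) :
    ∃ w, x ≤ w ∧ w ⋖ b := by
  have hne : ({y | x ≤ y ∧ y < b} : Set T.carrier).Nonempty := ⟨x, le_rfl, h⟩
  have hfin : ({y | x ≤ y ∧ y < b} : Set T.carrier).Finite := Set.toFinite _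
  obtain ⟨w, hw, hmax⟩ := Set.Finite.exists_maximalFor id _ hfin hne
  refine ⟨w, hw.1, hw.2, ?_⟩
  intro z hz hzb
  have hzset : z ∈ {y | x ≤ y ∧ y < b} := ⟨hw.1.trans hz.le, hzb⟩
  exact absurd (hmax hzset hz.le) (not_le_of_gt hz)

lemma epi_mono {S T : FiniteRootedTree} {φ : S.carrier → T.carrier}
    (h : IsTreeEpi S T φ) : Monotone φ := by
  intro s s' hle
  by_cases he : s = s'
  · exact he ▸ le_rfl
  have hlt : s < s' := hle.lt_of_ne he
  clear hle he
  -- wf induction on s'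
  induction s' using WellFoundedLT.induction with
  | _ s' ih =>
    obtain ⟨w, hsw, hwb⟩ := exists_cover_ge hlt
    have h1 : φ w ≤ φ s' := R_le (h.2.1 w s' (Or.inr hwb))
    rcases hsw.lt_or_eq with hlt' | he'
    · exact (ih w hwb.1 hlt').trans h1
    · exact he' ▸ h1

lemma epi_bot {S T : FiniteRootedTree} {φ : S.carrier → T.carrier}
    (h : IsTreeEpi S T φ) : φ ⊥ = ⊥ := by
  obtain ⟨b, hb⟩ := h.1 ⊥
  have := epi_mono h (bot_le : (⊥ : S.carrier) ≤ b)
  rw [hb] at this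
  exact le_bot_iff.mp this

end APaux

namespace APaux

variable {T : FiniteRootedTree}

open Classical in
noncomputable def seqAux (T : FiniteRootedTree) (b : T.carrier) : ℕ → {x : T.carrier // x ≤ b}
  | 0 => ⟨⊥, bot_le⟩
  | k + 1 =>
    if h : (seqAux T b k).1 = b then ⟨b, le_rfl⟩
    else ⟨(exists_cover_le ((seqAux T b k).2.lt_of_ne h)).choose,
      (exists_cover_le ((seqAux T b k).2.lt_of_ne h)).choose_spec.2⟩

noncomputable def seq (T : FiniteRootedTree) (b : T.carrier) (k : ℕ) : T.carrier :=
  (seqAux T b k).1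

lemma seq_zero (b : T.carrier) : seq T b 0 = ⊥ := rfl

lemma seq_le (b : T.carrier) (k : ℕ) : seq T b k ≤ b := (seqAux T b k).2

lemma seq_succ_of_eq {b : T.carrier} {k : ℕ} (h : seq T b k = b) : seq T b (k + 1) = b := by
  simp only [seq] at h
  simp only [seq, seqAux]
  rw [dif_pos h]

lemma seq_succ_covby {b : T.carrier} {k : ℕ} (h : seq T b k ≠ b) :
    seq T b k ⋖ seq T b (k + 1) := by
  simp only [seq] at h
  simp only [seq, seqAux]
  rw [dif_neg h]
  exact (exists_cover_le ((seq_le b k).lt_of_ne h)).choose_spec.1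

lemma seq_R (b : T.carrier) (k : ℕ) : T.R (seq T b k) (seq T b (k + 1)) := by
  by_cases h : seq T b k = b
  · exact Or.inl (h.trans (seq_succ_of_eq h).symm)
  · exact Or.inr (seq_succ_covby h)

lemma seq_mono (b : T.carrier) : Monotone (seq T b) :=
  monotone_nat_of_le_succ fun k => R_le (seq_R b k)

lemma seq_succ_eq_iff {b : T.carrier} {k : ℕ} : seq T b (k + 1) = seq T b k ↔ seq T b k = b := by
  constructor
  · intro h
    by_contra hb
    exact (seq_succ_covby hb).lt.ne' h
  · intro h
    rw [seq_succ_of_eq h, h]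

lemma seq_eq_b_mono {b : T.carrier} {k l : ℕ} (h : seq T b k = b) (hkl : k ≤ l) :
    seq T b l = b := by
  induction l, hkl using Nat.le_induction with
  | base => exact h
  | succ l _ ih => exact seq_succ_of_eq ih

lemma seq_cover_step {b x x' : T.carrier} {k : ℕ} (h : seq T b k = x) (hc : x ⋖ x')
    (hb : x' ≤ b) : seq T b (k + 1) = x' := by
  have hxb : seq T b k ≠ b := by
    rw [h]; intro hxb; rw [hxb] at hc; exact absurd (hc.lt.trans_le hb) (lt_irrefl b)
  have := seq_succ_covby hxb
  rw [h] at this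
  exact cover_unique this hc (seq_le b (k+1)) hb

lemma seq_lt_of_lt {b : T.carrier} {L : ℕ} (h : ∀ l, l < L → seq T b l ≠ b) :
    ∀ m l, m < l → l ≤ L → seq T b m < seq T b l := by
  intro m l
  induction l with
  | zero => omega
  | succ l ih =>
    intro hml hlL
    have hcov : seq T b l ⋖ seq T b (l + 1) := seq_succ_covby (h l (by omega))
    rcases Nat.lt_or_ge m l with hm | hm
    · exact (ih hm (by omega)).trans hcov.lt
    · have : m = l := by omega
      rw [this]; exact hcov.lt

lemma seq_stab (b : T.carrier) {k : ℕ} (hk : Fintype.card T.carrier ≤ k) : seq T b k = b := by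
  set K := Fintype.card T.carrier
  by_contra hne
  have h : ∀ l, l < K → seq T b l ≠ b := by
    intro l hl hb
    exact hne (seq_eq_b_mono hb (by omega))
  have hb' : ∀ l, l ≤ K → seq T b l ≠ b := by
    intro l hl hb
    exact hne (seq_eq_b_mono hb (by omega))
  have hinj : Function.Injective (fun m : Fin (K + 1) => seq T b m) := by
    intro a c hac
    by_contra hne'
    rcases Ne.lt_or_gt hne' with hlt | hlt
    · exact (seq_lt_of_lt h a c hlt (by omega)).ne hac
    · exact (seq_lt_of_lt h c a hlt (by omega)).ne hac.symm
  have := Fintype.card_le_of_injective _ hinj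
  rw [Fintype.card_fin] at this
  omega

lemma seq_attain {b x : T.carrier} (hx : x ≤ b) : ∃ k, seq T b k = x := by
  induction x using WellFoundedLT.induction with
  | _ x ih =>
    by_cases hbot : x = ⊥
    · exact ⟨0, hbot.symm⟩
    · have hlt : (⊥ : T.carrier) < x := bot_le.lt_of_ne (Ne.symm hbot)
      obtain ⟨w, _, hwx⟩ := exists_cover_ge hlt
      obtain ⟨k, hk⟩ := ih w hwx.1 (hwx.1.le.trans hx)
      exact ⟨k + 1, seq_cover_step hk hwx hx⟩

lemma seq_index_bound {b : T.carrier} {i : ℕ} (h : seq T b (i + 1) ≠ seq T b i) :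
    i + 1 < Fintype.card T.carrier := by
  have hne : ∀ l, l < i + 1 → seq T b l ≠ b := by
    intro l hl hb
    have h1 := seq_eq_b_mono hb (show l ≤ i by omega)
    have h2 := seq_eq_b_mono hb (show l ≤ i + 1 by omega)
    exact h (h2.trans h1.symm)
  have hinj : Function.Injective (fun m : Fin (i + 2) => seq T b m) := by
    intro a c hac
    by_contra hne'
    rcases Ne.lt_or_gt hne' with hlt | hlt
    · exact (seq_lt_of_lt hne a c hlt (by omega)).ne hac
    · exact (seq_lt_of_lt hne c a hlt (by omega)).ne hac.symm
  have := Fintype.card_le_of_injective _ hinj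
  rw [Fintype.card_fin] at this
  omega

end APaux

namespace APaux

open Classical

section Merge

variable (A B₁ B₂ : FiniteRootedTree) (φ₁ : B₁.carrier → A.carrier)
  (φ₂ : B₂.carrier → A.carrier) (b₁ : B₁.carrier) (b₂ : B₂.carrier)

open Classical in
noncomputable def mstep (p : ℕ × ℕ) : ℕ × ℕ :=
  if seq B₁ b₁ (p.1 + 1) ≠ seq B₁ b₁ p.1 ∧
      φ₁ (seq B₁ b₁ (p.1 + 1)) = φ₁ (seq B₁ b₁ p.1) then (p.1 + 1, p.2)
  else if seq B₂ b₂ (p.2 + 1) ≠ seq B₂ b₂ p.2 ∧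
      φ₂ (seq B₂ b₂ (p.2 + 1)) = φ₂ (seq B₂ b₂ p.2) then (p.1, p.2 + 1)
  else if seq B₁ b₁ (p.1 + 1) ≠ seq B₁ b₁ p.1 then (p.1 + 1, p.2 + 1)
  else p

noncomputable def mF : ℕ → ℕ × ℕ
  | 0 => (0, 0)
  | k + 1 => mstep A B₁ B₂ φ₁ φ₂ b₁ b₂ (mF k)

lemma mF_step_fst (k : ℕ) :
    (mF A B₁ B₂ φ₁ φ₂ b₁ b₂ (k + 1)).1 = (mF A B₁ B₂ φ₁ φ₂ b₁ b₂ k).1 ∨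
    (mF A B₁ B₂ φ₁ φ₂ b₁ b₂ (k + 1)).1 = (mF A B₁ B₂ φ₁ φ₂ b₁ b₂ k).1 + 1 := by
  have hr : mF A B₁ B₂ φ₁ φ₂ b₁ b₂ (k + 1) = mstep A B₁ B₂ φ₁ φ₂ b₁ b₂ (mF A B₁ B₂ φ₁ φ₂ b₁ b₂ k) := rfl
  rw [hr]
  unfold mstep
  split_ifs <;> simp

lemma mF_step_snd (k : ℕ) :
    (mF A B₁ B₂ φ₁ φ₂ b₁ b₂ (k + 1)).2 = (mF A B₁ B₂ φ₁ φ₂ b₁ b₂ k).2 ∨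
    (mF A B₁ B₂ φ₁ φ₂ b₁ b₂ (k + 1)).2 = (mF A B₁ B₂ φ₁ φ₂ b₁ b₂ k).2 + 1 := by
  have hr : mF A B₁ B₂ φ₁ φ₂ b₁ b₂ (k + 1) = mstep A B₁ B₂ φ₁ φ₂ b₁ b₂ (mF A B₁ B₂ φ₁ φ₂ b₁ b₂ k) := rfl
  rw [hr]
  unfold mstep
  split_ifs <;> simp

variable {A B₁ B₂ φ₁ φ₂}
variable (h₁ : IsTreeEpi B₁ A φ₁) (h₂ : IsTreeEpi B₂ A φ₂) (hb : φ₁ b₁ = φ₂ b₂)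

def mDone (p : ℕ × ℕ) : Prop := seq B₁ b₁ p.1 = b₁ ∧ seq B₂ b₂ p.2 = b₂

lemma mdone_step {p : ℕ × ℕ} (h : mDone b₁ b₂ p) : mstep A B₁ B₂ φ₁ φ₂ b₁ b₂ p = p := by
  have h1 : seq B₁ b₁ (p.1 + 1) = seq B₁ b₁ p.1 := by
    rw [seq_succ_eq_iff]; exact h.1
  have h2 : seq B₂ b₂ (p.2 + 1) = seq B₂ b₂ p.2 := by
    rw [seq_succ_eq_iff]; exact h.2
  unfold mstep
  rw [if_neg (by simp [h1]), if_neg (by simp [h2]), if_neg (by simp [h1])]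

include h₁ h₂ hb in
/-- The main merge invariant, proved jointly by induction. -/
lemma mMain : ∀ k : ℕ,
    (φ₁ (seq B₁ b₁ (mF A B₁ B₂ φ₁ φ₂ b₁ b₂ k).1)
      = φ₂ (seq B₂ b₂ (mF A B₁ B₂ φ₁ φ₂ b₁ b₂ k).2)) ∧
    ((mF A B₁ B₂ φ₁ φ₂ b₁ b₂ k).1 + 1 ≤ Fintype.card B₁.carrier ∧
     (mF A B₁ B₂ φ₁ φ₂ b₁ b₂ k).2 + 1 ≤ Fintype.card B₂.carrier) ∧
    (mDone b₁ b₂ (mF A B₁ B₂ φ₁ φ₂ b₁ b₂ k) ∨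
      k ≤ (mF A B₁ B₂ φ₁ φ₂ b₁ b₂ k).1 + (mF A B₁ B₂ φ₁ φ₂ b₁ b₂ k).2) := by
  intro k
  induction k with
  | zero =>
    refine ⟨?_, ⟨?_, ?_⟩, Or.inr (by omega)⟩
    · show φ₁ (seq B₁ b₁ 0) = φ₂ (seq B₂ b₂ 0)
      rw [seq_zero, seq_zero, epi_bot h₁, epi_bot h₂]
    · show 0 + 1 ≤ _
      have : Nonempty B₁.carrier := ⟨⊥⟩
      have := Fintype.card_pos (α := B₁.carrier)
      omega
    · show 0 + 1 ≤ _
      have : Nonempty B₂.carrier := ⟨⊥⟩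
      have := Fintype.card_pos (α := B₂.carrier)
      omega
  | succ k ih =>
    obtain ⟨hinv, ⟨hbd1, hbd2⟩, hprog⟩ := ih
    set i := (mF A B₁ B₂ φ₁ φ₂ b₁ b₂ k).1 with hi
    set j := (mF A B₁ B₂ φ₁ φ₂ b₁ b₂ k).2 with hj
    by_cases hdone : mDone b₁ b₂ (mF A B₁ B₂ φ₁ φ₂ b₁ b₂ k)
    · -- done: step is identity
      have hstep : mF A B₁ B₂ φ₁ φ₂ b₁ b₂ (k + 1) = mF A B₁ B₂ φ₁ φ₂ b₁ b₂ k :=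
        mdone_step b₁ b₂ hdone
      rw [hstep]
      exact ⟨hinv, ⟨hbd1, hbd2⟩, Or.inl hdone⟩
    · have hstep : mF A B₁ B₂ φ₁ φ₂ b₁ b₂ (k + 1)
          = mstep A B₁ B₂ φ₁ φ₂ b₁ b₂ (mF A B₁ B₂ φ₁ φ₂ b₁ b₂ k) := rfl
      -- case analysis on the branch taken
      by_cases c1 : seq B₁ b₁ (i + 1) ≠ seq B₁ b₁ i ∧
          φ₁ (seq B₁ b₁ (i + 1)) = φ₁ (seq B₁ b₁ i)
      · -- branch 1
        have hval : mF A B₁ B₂ φ₁ φ₂ b₁ b₂ (k + 1) = (i + 1, j) := by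
          rw [hstep]; unfold mstep; rw [if_pos]; exact c1
        rw [hval]
        refine ⟨by simpa [c1.2] using hinv, ⟨seq_index_bound c1.1, hbd2⟩, Or.inr ?_⟩
        rcases hprog with hd | hd
        · exact absurd hd hdone
        · simp only; omega
      · by_cases c2 : seq B₂ b₂ (j + 1) ≠ seq B₂ b₂ j ∧
            φ₂ (seq B₂ b₂ (j + 1)) = φ₂ (seq B₂ b₂ j)
        · -- branch 2
          have hval : mF A B₁ B₂ φ₁ φ₂ b₁ b₂ (k + 1) = (i, j + 1) := by
            rw [hstep]; unfold mstep; rw [if_neg c1, if_pos]; exact c2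
          rw [hval]
          refine ⟨by simpa [c2.2] using hinv, ⟨hbd1, seq_index_bound c2.1⟩, Or.inr ?_⟩
          rcases hprog with hd | hd
          · exact absurd hd hdone
          · simp only; omega
        · by_cases c3 : seq B₁ b₁ (i + 1) ≠ seq B₁ b₁ i
          · -- branch 3: both advance
            have hval : mF A B₁ B₂ φ₁ φ₂ b₁ b₂ (k + 1) = (i + 1, j + 1) := by
              rw [hstep]; unfold mstep; rw [if_neg c1, if_neg c2, if_pos c3]
            -- φ₁ (X (i+1)) covers φ₁ (X i)
            have hXc : seq B₁ b₁ i ⋖ seq B₁ b₁ (i + 1) := seq_succ_covby (by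
              intro hXi
              exact c3 (by rw [seq_succ_of_eq hXi, hXi]))
            have hAc : φ₁ (seq B₁ b₁ i) ⋖ φ₁ (seq B₁ b₁ (i + 1)) := by
              rcases h₁.2.1 _ _ (Or.inr hXc) with he | hc
              · exact absurd he.symm (fun hh => c1 ⟨c3, hh⟩)
              · exact hc
            -- Y must also strictly advance
            have hYne : seq B₂ b₂ (j + 1) ≠ seq B₂ b₂ j := by
              intro hY
              have hYb : seq B₂ b₂ j = b₂ := seq_succ_eq_iff.mp hY
              have h1 : φ₁ (seq B₁ b₁ (i + 1)) ≤ φ₁ b₁ :=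
                epi_mono h₁ (seq_le b₁ (i + 1))
              have h2 : φ₁ (seq B₁ b₁ i) = φ₁ b₁ := by
                rw [hinv, hYb, ← hb]
              rw [← h2] at h1
              exact absurd (hAc.lt.trans_le h1) (lt_irrefl _)
            have hYpl : φ₂ (seq B₂ b₂ (j + 1)) ≠ φ₂ (seq B₂ b₂ j) := fun hh => c2 ⟨hYne, hh⟩
            have hYc : seq B₂ b₂ j ⋖ seq B₂ b₂ (j + 1) := seq_succ_covby (by
              intro hYj
              exact hYne (seq_succ_eq_iff.mpr hYj))
            have hBc : φ₂ (seq B₂ b₂ j) ⋖ φ₂ (seq B₂ b₂ (j + 1)) := by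
              rcases h₂.2.1 _ _ (Or.inr hYc) with he | hc
              · exact absurd he.symm hYpl
              · exact hc
            have heq : φ₁ (seq B₁ b₁ (i + 1)) = φ₂ (seq B₂ b₂ (j + 1)) := by
              rw [hinv] at hAc
              refine cover_unique hAc hBc ?_ ?_ (b := φ₂ b₂)
              · rw [← hb]; exact epi_mono h₁ (seq_le b₁ (i + 1))
              · exact epi_mono h₂ (seq_le b₂ (j + 1))
            rw [hval]
            refine ⟨heq, ⟨seq_index_bound c3, seq_index_bound hYne⟩, Or.inr ?_⟩
            rcases hprog with hd | hd
            · exact absurd hd hdone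
            · simp only; omega
          · -- branch 4: impossible since not done
            exfalso
            push_neg at c3
            have hXb : seq B₁ b₁ i = b₁ := seq_succ_eq_iff.mp c3
            have hYnb : seq B₂ b₂ j ≠ b₂ := by
              intro hYb
              exact hdone ⟨hXb, hYb⟩
            have hYne : seq B₂ b₂ (j + 1) ≠ seq B₂ b₂ j := by
              intro hY
              exact hYnb (seq_succ_eq_iff.mp hY)
            have hYpl : φ₂ (seq B₂ b₂ (j + 1)) ≠ φ₂ (seq B₂ b₂ j) := fun hh => c2 ⟨hYne, hh⟩
            have hYc : seq B₂ b₂ j ⋖ seq B₂ b₂ (j + 1) := seq_succ_covby (by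
              intro hYj
              exact hYne (seq_succ_eq_iff.mpr hYj))
            have hBc : φ₂ (seq B₂ b₂ j) ⋖ φ₂ (seq B₂ b₂ (j + 1)) := by
              rcases h₂.2.1 _ _ (Or.inr hYc) with he | hc
              · exact absurd he.symm hYpl
              · exact hc
            have h2 : φ₂ (seq B₂ b₂ j) = φ₂ b₂ := by rw [← hinv, hXb, hb]
            have h1 : φ₂ (seq B₂ b₂ (j + 1)) ≤ φ₂ b₂ := epi_mono h₂ (seq_le b₂ (j + 1))
            rw [← h2] at h1
            exact absurd (hBc.lt.trans_le h1) (lt_irrefl _)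

include h₁ h₂ hb in
lemma mDone_stab : ∀ k, Fintype.card B₁.carrier + Fintype.card B₂.carrier ≤ k →
    mDone b₁ b₂ (mF A B₁ B₂ φ₁ φ₂ b₁ b₂ k) := by
  have hN : mDone b₁ b₂ (mF A B₁ B₂ φ₁ φ₂ b₁ b₂
      (Fintype.card B₁.carrier + Fintype.card B₂.carrier)) := by
    obtain ⟨_, ⟨hb1, hb2⟩, hd⟩ := mMain b₁ b₂ h₁ h₂ hb
      (Fintype.card B₁.carrier + Fintype.card B₂.carrier)
    rcases hd with hd | hd
    · exact hd
    · omega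
  intro k hk
  induction k, hk using Nat.le_induction with
  | base => exact hN
  | succ k _ ih =>
    have : mF A B₁ B₂ φ₁ φ₂ b₁ b₂ (k + 1) = mF A B₁ B₂ φ₁ φ₂ b₁ b₂ k :=
      mdone_step b₁ b₂ ih
    rw [this]; exact ih

end Merge

end APaux

namespace APaux

section Fan

variable {ι : Type} {N : ℕ}

/-- Order on `Option (ι × Fin N)`: `none` is the root; `some (z,i) ≤ some (z',j)` iff
same branch and `i ≤ j`. -/
def fle : Option (ι × Fin N) → Option (ι × Fin N) → Prop
  | none, _ => True
  | some _, none => False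
  | some p, some q => p.1 = q.1 ∧ p.2 ≤ q.2

lemma fle_none_left (c : Option (ι × Fin N)) : fle none c := trivial

lemma fle_some_none (p : ι × Fin N) : ¬ fle (some p) none := id

lemma fle_some_some {p q : ι × Fin N} : fle (some p) (some q) ↔ p.1 = q.1 ∧ p.2 ≤ q.2 :=
  Iff.rfl

instance fanPO : PartialOrder (Option (ι × Fin N)) where
  le := fle
  le_refl c := by cases c with
    | none => trivial
    | some p => exact ⟨rfl, le_rfl⟩
  le_trans a b c hab hbc := by
    cases a with
    | none => trivial
    | some p =>
      cases b with
      | none => exact absurd hab (fle_some_none p)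
      | some q =>
        cases c with
        | none => exact absurd hbc (fle_some_none q)
        | some r => exact ⟨hab.1.trans hbc.1, hab.2.trans hbc.2⟩
  le_antisymm a b hab hba := by
    cases a with
    | none =>
      cases b with
      | none => rfl
      | some q => exact absurd hba (fle_some_none q)
    | some p =>
      cases b with
      | none => exact absurd hab (fle_some_none p)
      | some q =>
        have : p = q := Prod.ext hab.1 (le_antisymm hab.2 hba.2)
        rw [this]

instance fanBot : OrderBot (Option (ι × Fin N)) where
  bot := none
  bot_le := fle_none_left

lemma fan_chains (t : Option (ι × Fin N)) : IsChain (· ≤ ·) {s | s ≤ t} := by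
  intro x hx y hy hne
  cases t with
  | none =>
    cases x with
    | none =>
      cases y with
      | none => exact absurd rfl hne
      | some q => exact absurd hy (fle_some_none q)
    | some p => exact absurd hx (fle_some_none p)
  | some r =>
    cases x with
    | none => exact Or.inl (fle_none_left y)
    | some p =>
      cases y with
      | none => exact Or.inr (fle_none_left (some p))
      | some q =>
        have hp : p.1 = r.1 := hx.1
        have hq : q.1 = r.1 := hy.1
        rcases le_total p.2 q.2 with h | h
        · exact Or.inl ⟨hp.trans hq.symm, h⟩
        · exact Or.inr ⟨hq.trans hp.symm, h⟩

def fanTree (ι : Type) [Fintype ι] (N : ℕ) : FiniteRootedTree where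
  carrier := Option (ι × Fin N)
  po := fanPO
  bot := fanBot
  chains := fan_chains

end Fan

end APaux

namespace APaux

section Fan2

variable {ι : Type} {N : ℕ}

lemma fle_iff_le {c d : Option (ι × Fin N)} : fle c d ↔ c ≤ d := Iff.rfl

lemma fnone_lt_some (p : ι × Fin N) : (none : Option (ι × Fin N)) < some p :=
  lt_of_le_of_ne (fle_none_left _) (by simp)

lemma fnot_lt_none (c : Option (ι × Fin N)) : ¬ c < none := by
  intro h
  cases c with
  | none => exact absurd rfl h.ne
  | some p => exact fle_some_none p h.le

lemma fsome_lt_some {p q : ι × Fin N} : some p < some q ↔ p.1 = q.1 ∧ p.2 < q.2 := by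
  constructor
  · intro h
    refine ⟨h.le.1, lt_of_le_of_ne h.le.2 ?_⟩
    intro he
    exact h.ne (Prod.ext h.le.1 he ▸ rfl)
  · intro ⟨h1, h2⟩
    refine lt_of_le_of_ne ⟨h1, h2.le⟩ ?_
    intro he
    exact h2.ne (congrArg Prod.snd (Option.some.inj he))

lemma fcov_none_iff {z : ι} {i : Fin N} :
    (none : Option (ι × Fin N)) ⋖ some (z, i) ↔ i.val = 0 := by
  constructor
  · intro h
    by_contra hne
    have h0 : 0 < N := i.pos
    have : (none : Option (ι × Fin N)) < some (z, ⟨0, h0⟩) := fnone_lt_some _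
    refine h.2 this (fsome_lt_some.mpr ⟨rfl, ?_⟩)
    exact Fin.lt_def.mpr (by simp; omega)
  · intro h
    refine ⟨fnone_lt_some _, ?_⟩
    intro c hc hci
    cases c with
    | none => exact absurd rfl hc.ne
    | some q =>
      have := (fsome_lt_some.mp hci).2
      have : q.2.val < i.val := this
      omega

lemma fcov_some_iff {p q : ι × Fin N} :
    some p ⋖ some q ↔ p.1 = q.1 ∧ q.2.val = p.2.val + 1 := by
  constructor
  · intro h
    obtain ⟨h1, h2⟩ := fsome_lt_some.mp h.lt
    refine ⟨h1, ?_⟩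
    by_contra hne
    have hlt : p.2.val + 1 < q.2.val := by
      have h2' := Fin.lt_def.mp h2
      omega
    have hmid : p.2.val + 1 < N := by omega
    refine h.2 (c := some (p.1, ⟨p.2.val + 1, hmid⟩)) ?_ ?_
    · exact fsome_lt_some.mpr ⟨rfl, Fin.lt_def.mpr (Nat.lt_succ_self _)⟩
    · exact fsome_lt_some.mpr ⟨h1, Fin.lt_def.mpr (by simp; omega)⟩
  · intro ⟨h1, h2⟩
    refine ⟨fsome_lt_some.mpr ⟨h1, Fin.lt_def.mpr (by omega)⟩, ?_⟩
    intro c hc hci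
    cases c with
    | none => exact fnot_lt_none _ hc
    | some r =>
      have ha := Fin.lt_def.mp (fsome_lt_some.mp hc).2
      have hb := Fin.lt_def.mp (fsome_lt_some.mp hci).2
      omega

/-- The standard branch of the fan through index `z`. -/
def fanBranch (z : ι) (N : ℕ) : Set (Option (ι × Fin N)) :=
  insert none (Set.range fun i : Fin N => some (z, i))

lemma fanBranch_chain (z : ι) : IsChain (· ≤ ·) (fanBranch z N) := by
  rintro x hx y hy hne
  rcases hx with rfl | ⟨i, rfl⟩
  · exact Or.inl (fle_none_left y)
  · rcases hy with rfl | ⟨j, rfl⟩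
    · exact Or.inr (fle_none_left _)
    · rcases le_total i j with h | h
      · exact Or.inl ⟨rfl, h⟩
      · exact Or.inr ⟨rfl, h⟩

lemma fanBranch_ncard (z : ι) : (fanBranch z N).ncard = N + 1 := by
  have hnm : (none : Option (ι × Fin N)) ∉ Set.range fun i : Fin N => some (z, i) := by
    rintro ⟨i, hi⟩
    simp at hi
  have hinj : Function.Injective fun i : Fin N => (some (z, i) : Option (ι × Fin N)) := by
    intro a b hab
    simpa using hab
  rw [fanBranch, Set.ncard_insert_of_notMem hnm (Set.toFinite _)]
  rw [← Set.image_univ, Set.ncard_image_of_injective _ hinj, Set.ncard_univ,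
    Nat.card_eq_fintype_card, Fintype.card_fin]

lemma maxChain_eq_fanBranch [Nonempty ι] {b : Set (Option (ι × Fin N))}
    (hm : IsMaxChain (· ≤ ·) b) : ∃ z, b = fanBranch z N := by
  by_cases h : ∃ z i, some (z, i) ∈ b
  · obtain ⟨z, i, hzi⟩ := h
    refine ⟨z, hm.2 (fanBranch_chain z) ?_⟩
    intro c hc
    cases c with
    | none => exact Set.mem_insert _ _
    | some q =>
      have hq : q.1 = z := by
        by_cases he : (some q : Option (ι × Fin N)) = some (z, i)
        · cases he; rfl
        · rcases hm.1 hc hzi he with hle | hle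
          · exact hle.1
          · exact hle.1.symm
      refine Set.mem_insert_iff.mpr (Or.inr ⟨q.2, ?_⟩)
      rw [← hq]
  · obtain ⟨z⟩ := ‹Nonempty ι›
    refine ⟨z, hm.2 (fanBranch_chain z) ?_⟩
    intro c hc
    cases c with
    | none => exact Set.mem_insert _ _
    | some q => exact absurd ⟨q.1, q.2, hc⟩ h

end Fan2

end APaux

namespace APaux

section Merge2

variable {A B₁ B₂ : FiniteRootedTree} {φ₁ : B₁.carrier → A.carrier}
  {φ₂ : B₂.carrier → A.carrier} (b₁ : B₁.carrier) (b₂ : B₂.carrier)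
  (h₁ : IsTreeEpi B₁ A φ₁) (h₂ : IsTreeEpi B₂ A φ₂) (hb : φ₁ b₁ = φ₂ b₂)

lemma uR (k : ℕ) : B₁.R (seq B₁ b₁ (mF A B₁ B₂ φ₁ φ₂ b₁ b₂ k).1)
    (seq B₁ b₁ (mF A B₁ B₂ φ₁ φ₂ b₁ b₂ (k + 1)).1) := by
  rcases mF_step_fst A B₁ B₂ φ₁ φ₂ b₁ b₂ k with h | h
  · rw [h]; exact R_refl _
  · rw [h]; exact seq_R _ _

lemma vR (k : ℕ) : B₂.R (seq B₂ b₂ (mF A B₁ B₂ φ₁ φ₂ b₁ b₂ k).2)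
    (seq B₂ b₂ (mF A B₁ B₂ φ₁ φ₂ b₁ b₂ (k + 1)).2) := by
  rcases mF_step_snd A B₁ B₂ φ₁ φ₂ b₁ b₂ k with h | h
  · rw [h]; exact R_refl _
  · rw [h]; exact seq_R _ _

include h₁ h₂ hb in
lemma mexists_step_fst {t t' : B₁.carrier} (hct : t ⋖ t') (ht' : t' ≤ b₁) :
    ∃ k, k + 1 ≤ Fintype.card B₁.carrier + Fintype.card B₂.carrier ∧
      seq B₁ b₁ (mF A B₁ B₂ φ₁ φ₂ b₁ b₂ k).1 = t ∧
      seq B₁ b₁ (mF A B₁ B₂ φ₁ φ₂ b₁ b₂ (k + 1)).1 = t' := by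
  classical
  set Ntot := Fintype.card B₁.carrier + Fintype.card B₂.carrier with hNtot
  obtain ⟨i, hi⟩ := seq_attain (T := B₁) (b := b₁) (hct.le.trans ht')
  have hi1 : seq B₁ b₁ (i + 1) = t' := seq_cover_step hi hct ht'
  -- the first index reaches past i
  have hdone := mDone_stab b₁ b₂ h₁ h₂ hb Ntot le_rfl
  have hbig : i + 1 ≤ (mF A B₁ B₂ φ₁ φ₂ b₁ b₂ Ntot).1 := by
    by_contra hlt
    push_neg at hlt
    have hle : (mF A B₁ B₂ φ₁ φ₂ b₁ b₂ Ntot).1 ≤ i := by omega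
    have := seq_mono b₁ hle
    rw [hdone.1, hi] at this
    exact absurd ((hct.lt.trans_le ht').trans_le this) (lt_irrefl _)
  have hex : ∃ k, i + 1 ≤ (mF A B₁ B₂ φ₁ φ₂ b₁ b₂ k).1 := ⟨Ntot, hbig⟩
  have hk₀spec : i + 1 ≤ (mF A B₁ B₂ φ₁ φ₂ b₁ b₂ (Nat.find hex)).1 := Nat.find_spec hex
  have hk₀pos : Nat.find hex ≠ 0 := by
    intro h0
    rw [h0] at hk₀spec
    have : (mF A B₁ B₂ φ₁ φ₂ b₁ b₂ 0).1 = 0 := rfl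
    omega
  obtain ⟨k, hk⟩ := Nat.exists_eq_succ_of_ne_zero hk₀pos
  rw [Nat.succ_eq_add_one] at hk
  rw [hk] at hk₀spec
  have hklt : ¬ i + 1 ≤ (mF A B₁ B₂ φ₁ φ₂ b₁ b₂ k).1 :=
    Nat.find_min hex (by omega)
  push_neg at hklt
  have hkeq : (mF A B₁ B₂ φ₁ φ₂ b₁ b₂ k).1 = i ∧
      (mF A B₁ B₂ φ₁ φ₂ b₁ b₂ (k + 1)).1 = i + 1 := by
    rcases mF_step_fst A B₁ B₂ φ₁ φ₂ b₁ b₂ k with h | h <;> omega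
  refine ⟨k, ?_, by rw [hkeq.1, hi], by rw [hkeq.2, hi1]⟩
  -- k < Ntot since not done at k
  by_contra hk
  push_neg at hk
  have hd : mDone b₁ b₂ (mF A B₁ B₂ φ₁ φ₂ b₁ b₂ k) :=
    mDone_stab b₁ b₂ h₁ h₂ hb k (by omega)
  have : seq B₁ b₁ (mF A B₁ B₂ φ₁ φ₂ b₁ b₂ k).1 = b₁ := hd.1
  rw [hkeq.1, hi] at this
  exact absurd (this ▸ (hct.lt.trans_le ht')) (lt_irrefl t)

include h₁ h₂ hb in
lemma mexists_step_snd {t t' : B₂.carrier} (hct : t ⋖ t') (ht' : t' ≤ b₂) :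
    ∃ k, k + 1 ≤ Fintype.card B₁.carrier + Fintype.card B₂.carrier ∧
      seq B₂ b₂ (mF A B₁ B₂ φ₁ φ₂ b₁ b₂ k).2 = t ∧
      seq B₂ b₂ (mF A B₁ B₂ φ₁ φ₂ b₁ b₂ (k + 1)).2 = t' := by
  classical
  set Ntot := Fintype.card B₁.carrier + Fintype.card B₂.carrier with hNtot
  obtain ⟨i, hi⟩ := seq_attain (T := B₂) (b := b₂) (hct.le.trans ht')
  have hi1 : seq B₂ b₂ (i + 1) = t' := seq_cover_step hi hct ht'
  have hdone := mDone_stab b₁ b₂ h₁ h₂ hb Ntot le_rfl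
  have hbig : i + 1 ≤ (mF A B₁ B₂ φ₁ φ₂ b₁ b₂ Ntot).2 := by
    by_contra hlt
    push_neg at hlt
    have hle : (mF A B₁ B₂ φ₁ φ₂ b₁ b₂ Ntot).2 ≤ i := by omega
    have := seq_mono b₂ hle
    rw [hdone.2, hi] at this
    exact absurd ((hct.lt.trans_le ht').trans_le this) (lt_irrefl _)
  have hex : ∃ k, i + 1 ≤ (mF A B₁ B₂ φ₁ φ₂ b₁ b₂ k).2 := ⟨Ntot, hbig⟩
  have hk₀spec : i + 1 ≤ (mF A B₁ B₂ φ₁ φ₂ b₁ b₂ (Nat.find hex)).2 := Nat.find_spec hex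
  have hk₀pos : Nat.find hex ≠ 0 := by
    intro h0
    rw [h0] at hk₀spec
    have : (mF A B₁ B₂ φ₁ φ₂ b₁ b₂ 0).2 = 0 := rfl
    omega
  obtain ⟨k, hk⟩ := Nat.exists_eq_succ_of_ne_zero hk₀pos
  rw [Nat.succ_eq_add_one] at hk
  rw [hk] at hk₀spec
  have hklt : ¬ i + 1 ≤ (mF A B₁ B₂ φ₁ φ₂ b₁ b₂ k).2 :=
    Nat.find_min hex (by omega)
  push_neg at hklt
  have hkeq : (mF A B₁ B₂ φ₁ φ₂ b₁ b₂ k).2 = i ∧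
      (mF A B₁ B₂ φ₁ φ₂ b₁ b₂ (k + 1)).2 = i + 1 := by
    rcases mF_step_snd A B₁ B₂ φ₁ φ₂ b₁ b₂ k with h | h <;> omega
  refine ⟨k, ?_, by rw [hkeq.1, hi], by rw [hkeq.2, hi1]⟩
  by_contra hk
  push_neg at hk
  have hd : mDone b₁ b₂ (mF A B₁ B₂ φ₁ φ₂ b₁ b₂ k) :=
    mDone_stab b₁ b₂ h₁ h₂ hb k (by omega)
  have : seq B₂ b₂ (mF A B₁ B₂ φ₁ φ₂ b₁ b₂ k).2 = b₂ := hd.2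
  rw [hkeq.1, hi] at this
  exact absurd (this ▸ (hct.lt.trans_le ht')) (lt_irrefl t)

end Merge2

end APaux

namespace APaux

section Final

variable (A B₁ B₂ : FiniteRootedTree) (φ₁ : B₁.carrier → A.carrier)
  (φ₂ : B₂.carrier → A.carrier)

abbrev PIdx := {z : B₁.carrier × B₂.carrier // φ₁ z.1 = φ₂ z.2}

noncomputable instance : Fintype (PIdx A B₁ B₂ φ₁ φ₂) :=
  Fintype.ofFinite _

def Nbig : ℕ := Fintype.card B₁.carrier + Fintype.card B₂.carrier

lemma Nbig_pos : 0 < Nbig B₁ B₂ := by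
  have : Nonempty B₁.carrier := ⟨⊥⟩
  have := Fintype.card_pos (α := B₁.carrier)
  have : Nonempty B₂.carrier := ⟨⊥⟩
  have := Fintype.card_pos (α := B₂.carrier)
  unfold Nbig
  omega

noncomputable def theC : FiniteRootedTree := fanTree (PIdx A B₁ B₂ φ₁ φ₂) (Nbig B₁ B₂)

noncomputable def theφ₃ : (theC A B₁ B₂ φ₁ φ₂).carrier → B₁.carrier := fun c =>
  c.casesOn ⊥ fun p =>
    seq B₁ p.1.val.1 (mF A B₁ B₂ φ₁ φ₂ p.1.val.1 p.1.val.2 (p.2.val + 1)).1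

noncomputable def theφ₄ : (theC A B₁ B₂ φ₁ φ₂).carrier → B₂.carrier := fun c =>
  c.casesOn ⊥ fun p =>
    seq B₂ p.1.val.2 (mF A B₁ B₂ φ₁ φ₂ p.1.val.1 p.1.val.2 (p.2.val + 1)).2

lemma fan_isFan (ι : Type) [Fintype ι] [Nonempty ι] (N : ℕ) : IsFan (fanTree ι N) := by
  constructor
  · intro s t p hst hts hps hpt hRs hRt
    have hlt_s : p < s := (hRs.resolve_left hps).lt
    have hlt_t : p < t := (hRt.resolve_left hpt).lt
    show p = ⊥
    cases p with
    | none => rfl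
    | some q =>
      cases s with
      | none => exact absurd hlt_s (fnot_lt_none _)
      | some ps =>
        cases t with
        | none => exact absurd hlt_t (fnot_lt_none _)
        | some pt =>
          have ha := fsome_lt_some.mp hlt_s
          have hb := fsome_lt_some.mp hlt_t
          exfalso
          rcases le_total ps.2 pt.2 with h | h
          · exact hst ⟨ha.1.symm.trans hb.1, h⟩
          · exact hts ⟨hb.1.symm.trans ha.1, h⟩
  · intro c₁ c₂ hm1 hm2
    obtain ⟨z1, rfl⟩ := maxChain_eq_fanBranch hm1
    obtain ⟨z2, rfl⟩ := maxChain_eq_fanBranch hm2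
    exact (fanBranch_ncard z1).trans (fanBranch_ncard z2).symm

variable {A B₁ B₂ φ₁ φ₂}
variable (h₁ : IsTreeEpi B₁ A φ₁) (h₂ : IsTreeEpi B₂ A φ₂)

include h₁ h₂ in
lemma theφ₃_surj : Function.Surjective (theφ₃ A B₁ B₂ φ₁ φ₂) := by
  intro x
  obtain ⟨w, hw⟩ := h₂.1 (φ₁ x)
  have hd := mDone_stab x w h₁ h₂ hw.symm (Nbig B₁ B₂) le_rfl
  refine ⟨some (⟨(x, w), hw.symm⟩, ⟨Nbig B₁ B₂ - 1, by
    have := Nbig_pos B₁ B₂; omega⟩), ?_⟩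
  show seq B₁ x (mF A B₁ B₂ φ₁ φ₂ x w (Nbig B₁ B₂ - 1 + 1)).1 = x
  have he : Nbig B₁ B₂ - 1 + 1 = Nbig B₁ B₂ := by
    have := Nbig_pos B₁ B₂; omega
  rw [he]
  exact hd.1

include h₁ h₂ in
lemma theφ₄_surj : Function.Surjective (theφ₄ A B₁ B₂ φ₁ φ₂) := by
  intro y
  obtain ⟨w, hw⟩ := h₁.1 (φ₂ y)
  have hd := mDone_stab w y h₁ h₂ hw (Nbig B₁ B₂) le_rfl
  refine ⟨some (⟨(w, y), hw⟩, ⟨Nbig B₁ B₂ - 1, by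
    have := Nbig_pos B₁ B₂; omega⟩), ?_⟩
  show seq B₂ y (mF A B₁ B₂ φ₁ φ₂ w y (Nbig B₁ B₂ - 1 + 1)).2 = y
  have he : Nbig B₁ B₂ - 1 + 1 = Nbig B₁ B₂ := by
    have := Nbig_pos B₁ B₂; omega
  rw [he]
  exact hd.2

lemma theφ₃_pres (s s' : (theC A B₁ B₂ φ₁ φ₂).carrier)
    (hR : (theC A B₁ B₂ φ₁ φ₂).R s s') : B₁.R (theφ₃ A B₁ B₂ φ₁ φ₂ s) (theφ₃ A B₁ B₂ φ₁ φ₂ s') := by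
  rcases hR with rfl | hc
  · exact R_refl _
  · cases s' with
    | none => exact absurd hc.lt (fnot_lt_none _)
    | some q =>
      cases s with
      | none =>
        have h0 : q.2.val = 0 := fcov_none_iff.mp hc
        show B₁.R ⊥ (seq B₁ q.1.val.1 (mF A B₁ B₂ φ₁ φ₂ q.1.val.1 q.1.val.2 (q.2.val + 1)).1)
        rw [h0]
        exact uR q.1.val.1 q.1.val.2 0
      | some p =>
        obtain ⟨hz, hval⟩ := fcov_some_iff.mp hc
        show B₁.R (seq B₁ p.1.val.1 (mF A B₁ B₂ φ₁ φ₂ p.1.val.1 p.1.val.2 (p.2.val + 1)).1)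
          (seq B₁ q.1.val.1 (mF A B₁ B₂ φ₁ φ₂ q.1.val.1 q.1.val.2 (q.2.val + 1)).1)
        rw [← hz, hval]
        exact uR p.1.val.1 p.1.val.2 (p.2.val + 1)

lemma theφ₄_pres (s s' : (theC A B₁ B₂ φ₁ φ₂).carrier)
    (hR : (theC A B₁ B₂ φ₁ φ₂).R s s') : B₂.R (theφ₄ A B₁ B₂ φ₁ φ₂ s) (theφ₄ A B₁ B₂ φ₁ φ₂ s') := by
  rcases hR with rfl | hc
  · exact R_refl _
  · cases s' with
    | none => exact absurd hc.lt (fnot_lt_none _)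
    | some q =>
      cases s with
      | none =>
        have h0 : q.2.val = 0 := fcov_none_iff.mp hc
        show B₂.R ⊥ (seq B₂ q.1.val.2 (mF A B₁ B₂ φ₁ φ₂ q.1.val.1 q.1.val.2 (q.2.val + 1)).2)
        rw [h0]
        exact vR q.1.val.1 q.1.val.2 0
      | some p =>
        obtain ⟨hz, hval⟩ := fcov_some_iff.mp hc
        show B₂.R (seq B₂ p.1.val.2 (mF A B₁ B₂ φ₁ φ₂ p.1.val.1 p.1.val.2 (p.2.val + 1)).2)
          (seq B₂ q.1.val.2 (mF A B₁ B₂ φ₁ φ₂ q.1.val.1 q.1.val.2 (q.2.val + 1)).2)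
        rw [← hz, hval]
        exact vR p.1.val.1 p.1.val.2 (p.2.val + 1)

include h₁ h₂ in
lemma theφ₃_lift (t t' : B₁.carrier) (hR : B₁.R t t') :
    ∃ s s', theφ₃ A B₁ B₂ φ₁ φ₂ s = t ∧ theφ₃ A B₁ B₂ φ₁ φ₂ s' = t' ∧
      (theC A B₁ B₂ φ₁ φ₂).R s s' := by
  rcases hR with rfl | hc
  · obtain ⟨c, hcx⟩ := theφ₃_surj h₁ h₂ t
    exact ⟨c, c, hcx, hcx, Or.inl rfl⟩
  · obtain ⟨w, hw⟩ := h₂.1 (φ₁ t')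
    obtain ⟨k, hkN, hk1, hk2⟩ := mexists_step_fst t' w h₁ h₂ hw.symm hc le_rfl
    cases k with
    | zero =>
      refine ⟨none, some (⟨(t', w), hw.symm⟩, ⟨0, Nbig_pos B₁ B₂⟩), ?_, hk2, ?_⟩
      · exact hk1
      · exact Or.inr (fcov_none_iff.mpr rfl)
    | succ k' =>
      have hlt : k' + 1 < Nbig B₁ B₂ := hkN
      refine ⟨some (⟨(t', w), hw.symm⟩, ⟨k', by omega⟩),
        some (⟨(t', w), hw.symm⟩, ⟨k' + 1, hlt⟩), hk1, hk2, ?_⟩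
      exact Or.inr (fcov_some_iff.mpr ⟨rfl, rfl⟩)

include h₁ h₂ in
lemma theφ₄_lift (t t' : B₂.carrier) (hR : B₂.R t t') :
    ∃ s s', theφ₄ A B₁ B₂ φ₁ φ₂ s = t ∧ theφ₄ A B₁ B₂ φ₁ φ₂ s' = t' ∧
      (theC A B₁ B₂ φ₁ φ₂).R s s' := by
  rcases hR with rfl | hc
  · obtain ⟨c, hcx⟩ := theφ₄_surj h₁ h₂ t
    exact ⟨c, c, hcx, hcx, Or.inl rfl⟩
  · obtain ⟨w, hw⟩ := h₁.1 (φ₂ t')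
    obtain ⟨k, hkN, hk1, hk2⟩ := mexists_step_snd w t' h₁ h₂ hw hc le_rfl
    cases k with
    | zero =>
      refine ⟨none, some (⟨(w, t'), hw⟩, ⟨0, Nbig_pos B₁ B₂⟩), ?_, hk2, ?_⟩
      · exact hk1
      · exact Or.inr (fcov_none_iff.mpr rfl)
    | succ k' =>
      have hlt : k' + 1 < Nbig B₁ B₂ := hkN
      refine ⟨some (⟨(w, t'), hw⟩, ⟨k', by omega⟩),
        some (⟨(w, t'), hw⟩, ⟨k' + 1, hlt⟩), hk1, hk2, ?_⟩
      exact Or.inr (fcov_some_iff.mpr ⟨rfl, rfl⟩)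

include h₁ h₂ in
lemma the_comm : φ₁ ∘ theφ₃ A B₁ B₂ φ₁ φ₂ = φ₂ ∘ theφ₄ A B₁ B₂ φ₁ φ₂ := by
  funext c
  cases c with
  | none =>
    show φ₁ ⊥ = φ₂ ⊥
    rw [epi_bot h₁, epi_bot h₂]
  | some p =>
    exact (mMain p.1.val.1 p.1.val.2 h₁ h₂ p.1.prop (p.2.val + 1)).1

end Final

end APaux

/-- The amalgamation property for the family of finite rooted trees: two epimorphisms
onto a common tree can be amalgamated, moreover by a fan. -/
theorem finiteRootedTrees_AP (A B₁ B₂ : FiniteRootedTree)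
    (φ₁ : B₁.carrier → A.carrier) (φ₂ : B₂.carrier → A.carrier)
    (h₁ : IsTreeEpi B₁ A φ₁) (h₂ : IsTreeEpi B₂ A φ₂) :
    ∃ (C : FiniteRootedTree) (φ₃ : C.carrier → B₁.carrier) (φ₄ : C.carrier → B₂.carrier),
      IsFan C ∧ IsTreeEpi C B₁ φ₃ ∧ IsTreeEpi C B₂ φ₄ ∧ φ₁ ∘ φ₃ = φ₂ ∘ φ₄ := by
  haveI : Nonempty (APaux.PIdx A B₁ B₂ φ₁ φ₂) :=
    ⟨⟨(⊥, ⊥), by rw [APaux.epi_bot h₁, APaux.epi_bot h₂]⟩⟩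
  refine ⟨APaux.theC A B₁ B₂ φ₁ φ₂, APaux.theφ₃ A B₁ B₂ φ₁ φ₂, APaux.theφ₄ A B₁ B₂ φ₁ φ₂,
    APaux.fan_isFan _ _, ⟨APaux.theφ₃_surj h₁ h₂, APaux.theφ₃_pres, APaux.theφ₃_lift h₁ h₂⟩,
    ⟨APaux.theφ₄_surj h₁ h₂, APaux.theφ₄_pres, APaux.theφ₄_lift h₁ h₂⟩, APaux.the_comm h₁ h₂⟩
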